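/- If the superhedging cost ρ⁰ is (-∞,∞]-valued, then ρ⁰ is a coherent risk measure (proper, monotone, cash-invariant, convex, positively homogeneous), and its conjugate (ρ⁰)*(g) := sup_{x∈L} {g(-x) - ρ⁰(x)} equals 0 if g belongs to the set of positive normalized linear functionals vanishing nonpositively on M (i.e., g(1)=1 and g(m) ≤ 0 for all m ∈ M), and equals +∞ otherwise. -/

import Mathlib

noncomputable section
open MeasureTheory Filter Topology
open scoped ENNReal

variable {Ω : Type*} [MeasurableSpace Ω]

/-- The Köthe dual of `L`: a.e.-measurable `g` such that `g * x` is integrable for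
every `x ∈ L`.  This plays the role of the dual Orlicz space `L†`. -/
def Kdual (μ : Measure Ω) (L : Set (Ω → ℝ)) : Set (Ω → ℝ) :=
  {g | AEStronglyMeasurable g μ ∧ ∀ x ∈ L, Integrable (fun ω => g ω * x ω) μ}

/-- `𝒬`: densities of probability measures `Q ≪ ℙ` with `dQ/dℙ ∈ L†` and
`E_Q[m] ≤ 0` for all `m ∈ M`. -/
def QSet (μ : Measure Ω) (L M : Set (Ω → ℝ)) : Set (Ω → ℝ) :=
  {g | g ∈ Kdual μ L ∧ 0 ≤ᵐ[μ] g ∧ (∫ ω, g ω ∂μ) = 1 ∧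
    ∀ m ∈ M, (∫ ω, g ω * m ω ∂μ) ≤ 0}

/-- `𝒬ᵉ`: elements of `𝒬` equivalent to `ℙ`, i.e. with a.e. strictly positive density. -/
def QeSet (μ : Measure Ω) (L M : Set (Ω → ℝ)) : Set (Ω → ℝ) :=
  {g | g ∈ QSet μ L M ∧ ∀ᵐ ω ∂μ, 0 < g ω}

/-- The superhedging cost `ρ⁰(x) = inf {c ∈ ℝ : ∃ m ∈ M, c + m + x ≥ 0 a.s.}`. -/
def supCost (μ : Measure Ω) (M : Set (Ω → ℝ)) (x : Ω → ℝ) : EReal :=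
  sInf {c : EReal | ∃ r : ℝ, c = (r : EReal) ∧ ∃ m ∈ M, ∀ᵐ ω ∂μ, 0 ≤ r + m ω + x ω}

/-- `ρ̂⁰(x) = sup_{Q ∈ 𝒬} E_Q[-x]`. -/
def rhoHat (μ : Measure Ω) (L M : Set (Ω → ℝ)) (x : Ω → ℝ) : EReal :=
  ⨆ g ∈ QSet μ L M, (↑(∫ ω, g ω * (-x ω) ∂μ) : EReal)

/-- `ρ` is a convex risk measure on `L`: proper, `(-∞,∞]`-valued, monotone
(w.r.t. the a.s. order), cash-invariant, and convex. -/
def IsCRM (μ : Measure Ω) (L : Set (Ω → ℝ)) (ρ : (Ω → ℝ) → EReal) : Prop :=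
  ρ 0 < ⊤ ∧ (∀ x ∈ L, ρ x ≠ ⊥) ∧
  (∀ x ∈ L, ∀ y ∈ L, x ≤ᵐ[μ] y → ρ y ≤ ρ x) ∧
  (∀ x ∈ L, ∀ c : ℝ, ρ (fun ω => x ω + c) = ρ x - (c : EReal)) ∧
  (∀ x ∈ L, ∀ y ∈ L, ∀ a : ℝ, 0 ≤ a → a ≤ 1 →
    ρ (fun ω => a * x ω + (1 - a) * y ω) ≤ (a : EReal) * ρ x + ((1 - a : ℝ) : EReal) * ρ y)

/-- The Fatou property: `ρ(-xₙ) ↑ ρ(-x_∞)` along a.s. increasing a.s. convergent sequences. -/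
def HasFatou (μ : Measure Ω) (L : Set (Ω → ℝ)) (ρ : (Ω → ℝ) → EReal) : Prop :=
  ∀ (x : ℕ → Ω → ℝ) (x' : Ω → ℝ), (∀ n, x n ∈ L) → x' ∈ L →
    (∀ᵐ ω ∂μ, Monotone (fun n => x n ω) ∧ Tendsto (fun n => x n ω) atTop (nhds (x' ω))) →
    ρ (-x') = ⨆ n, ρ (-(x n))

/-- A good deal valuation: a normalized convex risk measure with the Fatou property
whose values lie within the no-arbitrage pricing bound. -/
def IsGDV (μ : Measure Ω) (L M : Set (Ω → ℝ)) (ρ : (Ω → ℝ) → EReal) : Prop :=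
  IsCRM μ L ρ ∧ ρ 0 = 0 ∧ HasFatou μ L ρ ∧
  ∀ x ∈ L, -supCost μ M x ≤ ρ (-x) ∧ ρ (-x) ≤ supCost μ M (-x)

/-- if the superhedging cost `ρ⁰` is `(-∞,∞]`-valued then it is a
coherent risk measure, and its conjugate equals `0` on positive normalized linear
functionals vanishing nonpositively on `M`, and `+∞` otherwise. -/

lemma supCost_le' {μ : Measure Ω} {M : Set (Ω → ℝ)} {x : Ω → ℝ} {r : ℝ}
    (h : ∃ m ∈ M, ∀ᵐ ω ∂μ, 0 ≤ r + m ω + x ω) : supCost μ M x ≤ (r : EReal) :=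
  sInf_le ⟨r, rfl, h⟩

lemma le_supCost' {μ : Measure Ω} {M : Set (Ω → ℝ)} {x : Ω → ℝ} {t : EReal}
    (h : ∀ r : ℝ, (∃ m ∈ M, ∀ᵐ ω ∂μ, 0 ≤ r + m ω + x ω) → t ≤ (r : EReal)) :
    t ≤ supCost μ M x :=
  le_sInf (fun c hc => by obtain ⟨r, rfl, hm⟩ := hc; exact h r hm)

lemma supCost_exists_lt {μ : Measure Ω} {M : Set (Ω → ℝ)} {x : Ω → ℝ} {t : EReal}
    (h : supCost μ M x < t) :
    ∃ r : ℝ, (r : EReal) < t ∧ ∃ m ∈ M, ∀ᵐ ω ∂μ, 0 ≤ r + m ω + x ω := by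
  obtain ⟨c, hc, hlt⟩ := sInf_lt_iff.1 h
  obtain ⟨r, rfl, hm⟩ := hc
  exact ⟨r, hlt, hm⟩

lemma ereal_sub_self_nonpos (a : EReal) : a - a ≤ 0 := by
  induction a using EReal.rec <;> simp [← EReal.coe_sub]

lemma ereal_eq_top_of_forall {z : EReal} (h : ∀ t : ℝ, (t : EReal) ≤ z) : z = ⊤ := by
  induction z using EReal.rec with
  | bot => exact absurd (h 0) (by simp)
  | coe r => exact absurd (h (r + 1)) (by norm_cast; linarith)
  | top => rfl

lemma ereal_exists_coe {x : EReal} (h1 : x ≠ ⊥) (h2 : x ≠ ⊤) : ∃ r : ℝ, x = (r : EReal) := by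
  induction x using EReal.rec with
  | bot => exact absurd rfl h1
  | coe r => exact ⟨r, rfl⟩
  | top => exact absurd rfl h2

theorem stmt_3 (μ : Measure Ω) [IsProbabilityMeasure μ]
    (L : Submodule ℝ (Ω → ℝ)) (hconst : ∀ c : ℝ, (fun _ => c) ∈ L)
    (M : Set (Ω → ℝ)) (hML : M ⊆ (L : Set (Ω → ℝ)))
    (hMconv : Convex ℝ M)
    (hMcone : ∀ m ∈ M, ∀ c : ℝ, 0 ≤ c → c • m ∈ M)
    (hMneg : ∀ x ∈ L, x ≤ᵐ[μ] (0 : Ω → ℝ) → x ∈ M)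
    (hbot : ∀ x ∈ L, supCost μ M x ≠ ⊥) :
    -- properness
    supCost μ M 0 < ⊤ ∧
    -- monotonicity
    (∀ x ∈ L, ∀ y ∈ L, x ≤ᵐ[μ] y → supCost μ M y ≤ supCost μ M x) ∧
    -- cash-invariance
    (∀ x ∈ L, ∀ c : ℝ, supCost μ M (fun ω => x ω + c) = supCost μ M x - (c : EReal)) ∧
    -- convexity
    (∀ x ∈ L, ∀ y ∈ L, ∀ a : ℝ, 0 ≤ a → a ≤ 1 →
      supCost μ M (fun ω => a * x ω + (1 - a) * y ω) ≤
        (a : EReal) * supCost μ M x + ((1 - a : ℝ) : EReal) * supCost μ M y) ∧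
    -- positive homogeneity
    (∀ x ∈ L, ∀ c : ℝ, 0 < c → supCost μ M (fun ω => c * x ω) = (c : EReal) * supCost μ M x) ∧
    -- the conjugate of ρ⁰
    (∀ g : (Ω → ℝ) →ₗ[ℝ] ℝ, (∀ x ∈ L, (0 : Ω → ℝ) ≤ᵐ[μ] x → 0 ≤ g x) →
      ((g (fun _ => 1) = 1 ∧ ∀ m ∈ M, g m ≤ 0) →
        (⨆ x ∈ (L : Set (Ω → ℝ)), ((↑(g (-x)) : EReal) - supCost μ M x)) = 0) ∧
      (¬ (g (fun _ => 1) = 1 ∧ ∀ m ∈ M, g m ≤ 0) →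
        (⨆ x ∈ (L : Set (Ω → ℝ)), ((↑(g (-x)) : EReal) - supCost μ M x)) = ⊤)) := by
  have hM0 : (0 : Ω → ℝ) ∈ M := hMneg 0 L.zero_mem (EventuallyLE.refl _ _)
  -- key homogeneity half
  have key : ∀ (x : Ω → ℝ) (c : ℝ), 0 < c →
      (c : EReal) * supCost μ M x ≤ supCost μ M (fun ω => c * x ω) := by
    intro x c hc
    apply le_supCost'
    rintro r ⟨m, hm, hae⟩
    have hfx : supCost μ M x ≤ ((r / c : ℝ) : EReal) := by
      apply supCost_le'
      refine ⟨(1 / c) • m, hMcone m hm (1 / c) (by positivity), ?_⟩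
      filter_upwards [hae] with ω hω
      have : (1 / c) * (r + m ω + c * x ω) = r / c + (1 / c) * m ω + x ω := by
        field_simp
      simp only [Pi.smul_apply, smul_eq_mul]
      nlinarith [mul_nonneg (le_of_lt (by positivity : (0:ℝ) < 1 / c)) hω]
    calc (c : EReal) * supCost μ M x ≤ (c : EReal) * ((r / c : ℝ) : EReal) :=
          mul_le_mul_of_nonneg_left hfx (by exact_mod_cast hc.le)
      _ = ((r : ℝ) : EReal) := by
          rw [← EReal.coe_mul]; congr 1; field_simp
  refine ⟨?_, ?_, ?_, ?_, ?_, ?_⟩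
  · -- properness
    refine lt_of_le_of_lt (supCost_le' (r := 0) ⟨0, hM0, ?_⟩) (by norm_num)
    filter_upwards with ω; simp
  · -- monotonicity
    intro x hx y hy hxy
    apply sInf_le_sInf
    rintro c ⟨r, rfl, m, hm, hae⟩
    refine ⟨r, rfl, m, hm, ?_⟩
    filter_upwards [hae, hxy] with ω h1 h2; linarith
  · -- cash invariance
    intro x hx c
    have h1 : supCost μ M (fun ω => x ω + c) + (c : EReal) ≤ supCost μ M x := by
      apply le_supCost'
      rintro r ⟨m, hm, hae⟩
      have : supCost μ M (fun ω => x ω + c) ≤ ((r - c : ℝ) : EReal) := by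
        apply supCost_le'
        refine ⟨m, hm, ?_⟩
        filter_upwards [hae] with ω hω; linarith
      calc supCost μ M (fun ω => x ω + c) + (c : EReal)
          ≤ ((r - c : ℝ) : EReal) + (c : EReal) := add_le_add this le_rfl
        _ = (r : EReal) := by norm_cast; ring
    have h2 : supCost μ M x - (c : EReal) ≤ supCost μ M (fun ω => x ω + c) := by
      apply le_supCost'
      rintro r ⟨m, hm, hae⟩
      have : supCost μ M x ≤ ((r + c : ℝ) : EReal) := by
        apply supCost_le'
        refine ⟨m, hm, ?_⟩
        filter_upwards [hae] with ω hω; linarith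
      calc supCost μ M x - (c : EReal) ≤ ((r + c : ℝ) : EReal) - (c : EReal) :=
            EReal.sub_le_sub this (le_refl _)
        _ = (r : EReal) := by norm_cast; ring
    refine le_antisymm ?_ h2
    calc supCost μ M (fun ω => x ω + c)
        = supCost μ M (fun ω => x ω + c) + (c : EReal) - (c : EReal) :=
          (EReal.add_sub_cancel_right).symm
      _ ≤ supCost μ M x - (c : EReal) := EReal.sub_le_sub h1 (le_refl _)
  · -- convexity
    intro x hx y hy a ha0 ha1
    rcases eq_or_lt_of_le ha0 with h0 | h0
    · have hfun : (fun ω => a * x ω + (1 - a) * y ω) = y := by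
        funext ω; rw [← h0]; ring
      rw [hfun, ← h0]
      simp
    rcases eq_or_lt_of_le ha1 with h1 | h1
    · have hfun : (fun ω => a * x ω + (1 - a) * y ω) = x := by
        funext ω; rw [h1]; ring
      rw [hfun, h1]
      simp
    by_cases hxt : supCost μ M x = ⊤
    · rw [hxt, EReal.coe_mul_top_of_pos h0]
      rw [EReal.top_add_of_ne_bot]
      · exact le_top
      · intro hb
        rcases eq_or_ne (supCost μ M y) ⊤ with hyt | hyt
        · rw [hyt, EReal.coe_mul_top_of_pos (by linarith)] at hb; exact absurd hb (by simp)
        · obtain ⟨py, hpy⟩ := ereal_exists_coe (hbot y hy) hyt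
          rw [hpy, ← EReal.coe_mul] at hb
          exact absurd hb (EReal.coe_ne_bot _)
    by_cases hyt : supCost μ M y = ⊤
    · rw [hyt, EReal.coe_mul_top_of_pos (by linarith : (0:ℝ) < 1 - a)]
      rw [EReal.add_top_of_ne_bot]
      · exact le_top
      · intro hb
        obtain ⟨px, hpx⟩ := ereal_exists_coe (hbot x hx) hxt
        rw [hpx, ← EReal.coe_mul] at hb
        exact absurd hb (EReal.coe_ne_bot _)
    obtain ⟨px, hpx⟩ := ereal_exists_coe (hbot x hx) hxt
    obtain ⟨py, hpy⟩ := ereal_exists_coe (hbot y hy) hyt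
    rw [hpx, hpy, ← EReal.coe_mul, ← EReal.coe_mul, ← EReal.coe_add]
    apply le_of_forall_gt_imp_ge_of_dense
    intro u hu
    obtain ⟨w, hw1, hw2⟩ := EReal.lt_iff_exists_real_btwn.1 hu
    rw [EReal.coe_lt_coe_iff] at hw1
    set ε : ℝ := w - (a * px + (1 - a) * py) with hε
    have hεpos : 0 < ε := by simp only [hε]; linarith
    obtain ⟨r, hr, m, hm, haem⟩ := supCost_exists_lt (x := x) (t := ((px + ε : ℝ) : EReal))
      (by rw [hpx]; exact_mod_cast (by linarith : px < px + ε))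
    obtain ⟨s, hs, n, hn, haen⟩ := supCost_exists_lt (x := y) (t := ((py + ε : ℝ) : EReal))
      (by rw [hpy]; exact_mod_cast (by linarith : py < py + ε))
    rw [EReal.coe_lt_coe_iff] at hr hs
    have hfeas : supCost μ M (fun ω => a * x ω + (1 - a) * y ω)
        ≤ ((a * r + (1 - a) * s : ℝ) : EReal) := by
      apply supCost_le'
      refine ⟨a • m + (1 - a) • n, hMconv hm hn ha0 (by linarith) (by ring), ?_⟩
      filter_upwards [haem, haen] with ω hω1 hω2
      simp only [Pi.add_apply, Pi.smul_apply, smul_eq_mul]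
      nlinarith [mul_nonneg ha0 hω1, mul_nonneg (by linarith : (0:ℝ) ≤ 1 - a) hω2]
    refine le_trans hfeas (le_trans ?_ hw2.le)
    rw [EReal.coe_le_coe_iff]
    nlinarith [mul_le_mul_of_nonneg_left hr.le ha0,
      mul_le_mul_of_nonneg_left hs.le (by linarith : (0:ℝ) ≤ 1 - a)]
  · -- positive homogeneity
    intro x hx c hc
    refine le_antisymm ?_ (key x c hc)
    have h1 := key (fun ω => c * x ω) c⁻¹ (inv_pos.2 hc)
    have hfun : (fun ω => c⁻¹ * (c * x ω)) = x := by
      funext ω; field_simp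
    rw [hfun] at h1
    have h2 := mul_le_mul_of_nonneg_left h1 (by exact_mod_cast hc.le : (0:EReal) ≤ (c:ℝ))
    calc supCost μ M (fun ω => c * x ω)
        = (c : EReal) * ((c⁻¹ : ℝ) * supCost μ M (fun ω => c * x ω)) := by
          rw [← mul_assoc, ← EReal.coe_mul, mul_inv_cancel₀ hc.ne', EReal.coe_one, one_mul]
      _ ≤ (c : EReal) * supCost μ M x := h2
  · -- conjugate
    intro g hg
    constructor
    · rintro ⟨hg1, hgM⟩
      apply le_antisymm
      · apply iSup₂_le
        intro x hx
        have hle : ((g (-x) : ℝ) : EReal) ≤ supCost μ M x := by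
          apply le_supCost'
          rintro r ⟨m, hm, hae⟩
          rw [EReal.coe_le_coe_iff]
          have hzL : (fun ω => r + m ω + x ω) ∈ L := by
            have : (fun ω => r + m ω + x ω) = (fun _ => r) + m + x := by
              funext ω; simp
            rw [this]
            exact L.add_mem (L.add_mem (hconst r) (hML hm)) hx
          have h0 : 0 ≤ g (fun ω => r + m ω + x ω) := by
            apply hg _ hzL
            filter_upwards [hae] with ω hω using hω
          have hdec : (fun ω => r + m ω + x ω) = r • (fun _ => (1:ℝ)) + m + x := by
            funext ω; simp [smul_eq_mul]
          rw [hdec, map_add, map_add, LinearMap.map_smul, smul_eq_mul, hg1] at h0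
          have := hgM m hm
          rw [map_neg]
          linarith
        calc ((g (-x) : ℝ) : EReal) - supCost μ M x
            ≤ supCost μ M x - supCost μ M x := EReal.sub_le_sub hle (le_refl _)
          _ ≤ 0 := ereal_sub_self_nonpos _
      · have h0 : supCost μ M (0 : Ω → ℝ) ≤ ((0:ℝ) : EReal) := by
          apply supCost_le'
          refine ⟨0, hM0, ?_⟩
          filter_upwards with ω; simp
        have hterm : (0 : EReal) ≤ ((g (-(0:Ω→ℝ)) : ℝ) : EReal) - supCost μ M (0:Ω→ℝ) := by
          have : ((g (-(0:Ω→ℝ)) : ℝ) : EReal) = ((0:ℝ):EReal) := by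
            norm_cast; rw [neg_zero, map_zero]
          rw [this]
          calc (0 : EReal) = ((0:ℝ):EReal) - ((0:ℝ):EReal) := by norm_cast
            _ ≤ ((0:ℝ):EReal) - supCost μ M (0:Ω→ℝ) := EReal.sub_le_sub (le_refl _) h0
        exact le_trans hterm (le_iSup₂ (f := fun x (_ : x ∈ (L : Set (Ω → ℝ))) =>
          ((g (-x) : ℝ) : EReal) - supCost μ M x) (0 : Ω → ℝ) L.zero_mem)
    · intro hcond
      apply ereal_eq_top_of_forall
      intro t
      by_cases hQ : ∀ m ∈ M, g m ≤ 0
      · have hP : g (fun _ => 1) ≠ 1 := fun h => hcond ⟨h, hQ⟩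
        set γ : ℝ := g (fun _ => 1) with hγ
        set c : ℝ := t / (1 - γ) with hc
        have hgc : g (-(fun _ => c) : Ω → ℝ) = -c * γ := by
          have : (-(fun _ => c) : Ω → ℝ) = (-c) • (fun _ => (1:ℝ)) := by
            funext ω; simp
          rw [this, LinearMap.map_smul, smul_eq_mul]
        have hρ : supCost μ M (fun _ => c) ≤ ((-c : ℝ) : EReal) := by
          apply supCost_le'
          refine ⟨0, hM0, ?_⟩
          filter_upwards with ω; simp
        have hterm : ((t : ℝ) : EReal) ≤ ((g (-(fun _ => c) : Ω → ℝ) : ℝ) : EReal)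
            - supCost μ M (fun _ => c) := by
          rw [hgc]
          calc ((t : ℝ) : EReal) = ((-c * γ : ℝ) : EReal) - ((-c : ℝ) : EReal) := by
                rw [← EReal.coe_sub]
                norm_cast
                have h1γ : (1 : ℝ) - γ ≠ 0 := sub_ne_zero.2 (Ne.symm hP)
                field_simp [hc]
                rw [hc, show (-γ - -1) = 1 - γ by ring, div_mul_cancel₀ _ h1γ]
            _ ≤ ((-c * γ : ℝ) : EReal) - supCost μ M (fun _ => c) :=
                EReal.sub_le_sub (le_refl _) hρ
        exact le_trans hterm (le_iSup₂ (f := fun x (_ : x ∈ (L : Set (Ω → ℝ))) =>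
          ((g (-x) : ℝ) : EReal) - supCost μ M x) (fun _ => c) (hconst c))
      · push_neg at hQ
        obtain ⟨m, hm, hgm⟩ := hQ
        set s : ℝ := max 0 (t / g m) with hs
        set x : Ω → ℝ := (-s) • m with hx
        have hxL : x ∈ L := Submodule.smul_mem L _ (hML hm)
        have hgx : g (-x) = s * g m := by
          rw [hx, ← neg_smul, neg_neg, LinearMap.map_smul, smul_eq_mul]
        have hts : t ≤ s * g m := by
          calc t = (t / g m) * g m := by field_simp
            _ ≤ s * g m := mul_le_mul_of_nonneg_right (le_max_right _ _) hgm.le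
        have hρ : supCost μ M x ≤ ((0:ℝ) : EReal) := by
          apply supCost_le'
          refine ⟨s • m, hMcone m hm s (le_max_left _ _), ?_⟩
          filter_upwards with ω
          simp only [hx, Pi.smul_apply, smul_eq_mul]
          ring_nf
          norm_num
        have hterm : ((t : ℝ) : EReal) ≤ ((g (-x) : ℝ) : EReal) - supCost μ M x := by
          calc ((t : ℝ) : EReal) ≤ ((s * g m : ℝ) : EReal) := by exact_mod_cast hts
            _ = ((g (-x) : ℝ) : EReal) - ((0:ℝ):EReal) := by rw [hgx]; norm_cast; ring
            _ ≤ ((g (-x) : ℝ) : EReal) - supCost μ M x := EReal.sub_le_sub (le_refl _) hρ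
        exact le_trans hterm (le_iSup₂ (f := fun x (_ : x ∈ (L : Set (Ω → ℝ))) =>
          ((g (-x) : ℝ) : EReal) - supCost μ M x) x hxL)
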